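/- Let S be ℓ×ℓ symmetric positive definite with eigendecomposition as above, q < ℓ, σ² = (1/(ℓ−q)) Σ_{j>q} λ_j with λ_q > σ², and W = U_q(Λ_q − σ²I)^{1/2}R for any orthonormal R (RᵀR = I). Then WWᵀ + σ²I has eigenvalues λ₁,…,λ_q (each with the corresponding eigenvector u_i) and σ² with multiplicity ℓ−q, and hence log det(WWᵀ + σ²I) = Σ_{j≤q} log λ_j + (ℓ−q) log σ² and trace((WWᵀ+σ²I)⁻¹S) = q + Σ_{j>q} λ_j/σ² = ℓ. -/

import Mathlib

open Matrix

theorem ppca_model_eigenstructure {ℓ q : ℕ} (hq : q < ℓ)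
    (S : Matrix (Fin ℓ) (Fin ℓ) ℝ) (hS : S.PosDef)
    (lam : Fin ℓ → ℝ) (hlam : Antitone lam)
    (U : Matrix (Fin ℓ) (Fin ℓ) ℝ) (hU : Uᵀ * U = 1)
    (hSdecomp : S = U * Matrix.diagonal lam * Uᵀ)
    (σ2 : ℝ)
    (hσ2 : σ2 = (1 / (ℓ - q : ℝ)) * ∑ j ∈ Finset.univ.filter (fun j : Fin ℓ => q ≤ (j : ℕ)), lam j)
    (hgap : ∀ i : Fin ℓ, (i : ℕ) < q → σ2 < lam i)
    (R : Matrix (Fin q) (Fin q) ℝ) (hR : Rᵀ * R = 1)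
    (W : Matrix (Fin ℓ) (Fin q) ℝ)
    (hW : W = U.submatrix id (Fin.castLE hq.le) *
      Matrix.diagonal (fun i : Fin q => Real.sqrt (lam (Fin.castLE hq.le i) - σ2)) * R) :
    (W * Wᵀ + σ2 • (1 : Matrix (Fin ℓ) (Fin ℓ) ℝ)) * U =
        U * Matrix.diagonal (fun i : Fin ℓ => if (i : ℕ) < q then lam i else σ2) ∧
      Real.log (W * Wᵀ + σ2 • (1 : Matrix (Fin ℓ) (Fin ℓ) ℝ)).det =
        (∑ j ∈ Finset.univ.filter (fun j : Fin ℓ => (j : ℕ) < q), Real.log (lam j)) +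
          (ℓ - q : ℝ) * Real.log σ2 ∧
      ((W * Wᵀ + σ2 • (1 : Matrix (Fin ℓ) (Fin ℓ) ℝ))⁻¹ * S).trace =
        (q : ℝ) + (∑ j ∈ Finset.univ.filter (fun j : Fin ℓ => q ≤ (j : ℕ)), lam j / σ2) ∧
      ((W * Wᵀ + σ2 • (1 : Matrix (Fin ℓ) (Fin ℓ) ℝ))⁻¹ * S).trace = (ℓ : ℝ) := by
  have hUU : U * Uᵀ = 1 := mul_eq_one_comm.mp hU
  have hRR : R * Rᵀ = 1 := mul_eq_one_comm.mp hR
  -- positivity of eigenvalues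
  have hdiagP : (Matrix.diagonal lam).PosDef := by
    have hdiag : Matrix.diagonal lam = Uᵀ * S * U := by
      rw [hSdecomp]
      symm
      calc Uᵀ * (U * Matrix.diagonal lam * Uᵀ) * U
          = (Uᵀ * U) * Matrix.diagonal lam * (Uᵀ * U) := by
            simp only [mul_assoc]
        _ = Matrix.diagonal lam := by rw [hU, one_mul, mul_one]
    rw [hdiag]
    constructor
    · have h1 := Matrix.isHermitian_conjTranspose_mul_mul U hS.1
      rwa [Matrix.conjTranspose_eq_transpose_of_trivial] at h1
    · intro x hx
      have hinj : Function.Injective U.mulVec := fun a b h => by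
        have h2 := congrArg (Uᵀ.mulVec) h
        rwa [Matrix.mulVec_mulVec, Matrix.mulVec_mulVec, hU, Matrix.one_mulVec,
          Matrix.one_mulVec] at h2
      have h3 := (hS.conjTranspose_mul_mul_same hinj).2 hx
      rwa [Matrix.conjTranspose_eq_transpose_of_trivial] at h3
  have hlampos : ∀ i, 0 < lam i := Matrix.posDef_diagonal_iff.mp hdiagP
  have hcast : (0:ℝ) < (ℓ:ℝ) - q := by
    have : (q:ℝ) < ℓ := by exact_mod_cast hq
    linarith
  have hσ2pos : 0 < σ2 := by
    rw [hσ2]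
    apply mul_pos (by positivity)
    apply Finset.sum_pos
    · intro i _; exact hlampos i
    · exact ⟨⟨q, hq⟩, by simp⟩
  -- filters as intervals
  have hfiltlt : Finset.univ.filter (fun j : Fin ℓ => (j:ℕ) < q) = Finset.Iio ⟨q, hq⟩ := by
    ext j; simp [Fin.lt_def]
  have hfiltge : Finset.univ.filter (fun j : Fin ℓ => q ≤ (j:ℕ)) = Finset.Ici ⟨q, hq⟩ := by
    ext j; simp [Fin.le_def]
  have hcardlt : (Finset.univ.filter (fun j : Fin ℓ => (j:ℕ) < q)).card = q := by
    rw [hfiltlt, Fin.card_Iio]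
  have hcardge : (Finset.univ.filter (fun j : Fin ℓ => q ≤ (j:ℕ))).card = ℓ - q := by
    rw [hfiltge, Fin.card_Ici]
  have hrw' : Finset.univ.filter (fun j : Fin ℓ => ¬ (j:ℕ) < q)
      = Finset.univ.filter (fun j : Fin ℓ => q ≤ (j:ℕ)) := by
    ext j; simp [Nat.not_lt]
  -- the diagonal entries of the model covariance
  set g : Fin ℓ → ℝ := fun i => if (i:ℕ) < q then lam i else σ2 with hg
  have hgpos : ∀ i, 0 < g i := by
    intro i; rw [hg]; dsimp only
    split
    · exact hlampos i
    · exact hσ2pos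
  -- compute W * Wᵀ
  set f : Fin ℓ → ℝ := fun i => if (i:ℕ) < q then lam i - σ2 else 0 with hf
  have hWWt : W * Wᵀ = U * Matrix.diagonal f * Uᵀ := by
    have hsq : (fun i : Fin q =>
        Real.sqrt (lam (Fin.castLE hq.le i) - σ2) * Real.sqrt (lam (Fin.castLE hq.le i) - σ2))
          = fun i : Fin q => lam (Fin.castLE hq.le i) - σ2 := by
      funext i
      exact Real.mul_self_sqrt (by
        have := hgap (Fin.castLE hq.le i) (by simpa using i.isLt)
        linarith)
    have key : W * Wᵀ = U.submatrix id (Fin.castLE hq.le) *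
        Matrix.diagonal (fun i : Fin q => lam (Fin.castLE hq.le i) - σ2) *
        (U.submatrix id (Fin.castLE hq.le))ᵀ := by
      rw [hW, Matrix.transpose_mul, Matrix.transpose_mul, Matrix.diagonal_transpose]
      simp only [← Matrix.mul_assoc]
      rw [Matrix.mul_assoc (U.submatrix id (Fin.castLE hq.le) * Matrix.diagonal _) R Rᵀ, hRR,
        Matrix.mul_one, Matrix.mul_assoc (U.submatrix id (Fin.castLE hq.le)),
        Matrix.diagonal_mul_diagonal, hsq]
    rw [key]
    ext a b
    rw [Matrix.mul_apply, Matrix.mul_apply]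
    simp only [Matrix.mul_diagonal, Matrix.transpose_apply, Matrix.submatrix_apply, id]
    have hF : ∀ i : Fin ℓ, q ≤ (i:ℕ) → U a i * f i * U b i = 0 := by
      intro i hi
      rw [hf]; dsimp only
      rw [if_neg (Nat.not_lt.mpr hi), mul_zero, zero_mul]
    have hss := Finset.sum_subset (Finset.subset_univ
        ((Finset.univ : Finset (Fin q)).map (Fin.castLEEmb hq.le)))
        (fun i _ hi => hF i (by
          by_contra hlt
          push_neg at hlt
          exact hi (Finset.mem_map.mpr ⟨⟨i, hlt⟩, Finset.mem_univ _, by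
            simp [Fin.castLEEmb, Fin.ext_iff]⟩)))
    rw [← hss, Finset.sum_map]
    refine Finset.sum_congr rfl fun i _ => ?_
    simp only [hf, Fin.castLEEmb, Fin.coe_castLE]
    rw [if_pos (by simpa using i.isLt)]
    rfl
  -- the model covariance
  set M := W * Wᵀ + σ2 • (1 : Matrix (Fin ℓ) (Fin ℓ) ℝ) with hM
  have hMU : M = U * Matrix.diagonal g * Uᵀ := by
    have hsig : σ2 • (1 : Matrix (Fin ℓ) (Fin ℓ) ℝ)
        = Matrix.diagonal (fun _ : Fin ℓ => σ2) := by
      ext i j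
      by_cases h : i = j <;> simp [Matrix.one_apply, Matrix.diagonal_apply, h]
    have hcomm : Uᵀ * Matrix.diagonal (fun _ : Fin ℓ => σ2) * U
        = Matrix.diagonal (fun _ : Fin ℓ => σ2) := by
      rw [← hsig, Matrix.mul_smul, mul_one, Matrix.smul_mul, hU]
    have h1 : σ2 • (1 : Matrix (Fin ℓ) (Fin ℓ) ℝ)
        = U * Matrix.diagonal (fun _ : Fin ℓ => σ2) * Uᵀ := by
      rw [hsig]
      calc Matrix.diagonal (fun _ : Fin ℓ => σ2)
          = (U * Uᵀ) * Matrix.diagonal (fun _ : Fin ℓ => σ2) * (U * Uᵀ) := by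
            rw [hUU, one_mul, mul_one]
        _ = U * (Uᵀ * Matrix.diagonal (fun _ : Fin ℓ => σ2) * U) * Uᵀ := by
            simp only [mul_assoc]
        _ = U * Matrix.diagonal (fun _ : Fin ℓ => σ2) * Uᵀ := by rw [hcomm]
    have hfg : (fun i : Fin ℓ => f i + σ2) = g := by
      funext i
      by_cases h : (i:ℕ) < q <;> simp [hf, hg, h]
    rw [hM, hWWt, h1, ← Matrix.add_mul, ← Matrix.mul_add, Matrix.diagonal_add, hfg]
  have htrace : (M⁻¹ * S).trace =
      (q : ℝ) + (∑ j ∈ Finset.univ.filter (fun j : Fin ℓ => q ≤ (j : ℕ)), lam j / σ2) := by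
    have hMinv : M⁻¹ = U * Matrix.diagonal (fun i => (g i)⁻¹) * Uᵀ := by
      apply Matrix.inv_eq_right_inv
      rw [hMU]
      calc U * Matrix.diagonal g * Uᵀ * (U * Matrix.diagonal (fun i => (g i)⁻¹) * Uᵀ)
          = U * Matrix.diagonal g * (Uᵀ * U) * Matrix.diagonal (fun i => (g i)⁻¹) * Uᵀ := by
            simp only [mul_assoc]
        _ = U * (Matrix.diagonal g * Matrix.diagonal (fun i => (g i)⁻¹)) * Uᵀ := by
            rw [hU, mul_one]; simp only [mul_assoc]
        _ = U * Uᵀ := by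
            rw [Matrix.diagonal_mul_diagonal]
            have : (fun i => g i * (g i)⁻¹) = fun _ : Fin ℓ => (1:ℝ) := by
              funext i; exact mul_inv_cancel₀ (hgpos i).ne'
            rw [this, Matrix.diagonal_one, mul_one]
        _ = 1 := hUU
    have htr : (M⁻¹ * S).trace = ∑ i : Fin ℓ, (g i)⁻¹ * lam i := by
      rw [hMinv, hSdecomp]
      have : U * Matrix.diagonal (fun i => (g i)⁻¹) * Uᵀ * (U * Matrix.diagonal lam * Uᵀ)
          = U * Matrix.diagonal (fun i => (g i)⁻¹ * lam i) * Uᵀ := by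
        calc U * Matrix.diagonal (fun i => (g i)⁻¹) * Uᵀ * (U * Matrix.diagonal lam * Uᵀ)
            = U * Matrix.diagonal (fun i => (g i)⁻¹) * (Uᵀ * U) * Matrix.diagonal lam * Uᵀ := by
              simp only [mul_assoc]
          _ = U * (Matrix.diagonal (fun i => (g i)⁻¹) * Matrix.diagonal lam) * Uᵀ := by
              rw [hU, mul_one]; simp only [mul_assoc]
          _ = U * Matrix.diagonal (fun i => (g i)⁻¹ * lam i) * Uᵀ := by
              rw [Matrix.diagonal_mul_diagonal]
      rw [this, Matrix.trace_mul_cycle, hU, one_mul, Matrix.trace_diagonal]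
    rw [htr]
    have e1 : ∑ i ∈ Finset.univ.filter (fun j : Fin ℓ => (j:ℕ) < q), (g i)⁻¹ * lam i
        = (q:ℝ) := by
      have h : ∀ i ∈ Finset.univ.filter (fun j : Fin ℓ => (j:ℕ) < q),
          (g i)⁻¹ * lam i = 1 := by
        intro i hi
        rw [Finset.mem_filter] at hi
        rw [hg]; dsimp only
        rw [if_pos hi.2]
        exact inv_mul_cancel₀ (hlampos i).ne'
      rw [Finset.sum_congr rfl h, Finset.sum_const, hcardlt, nsmul_eq_mul, mul_one]
    have e2 : ∑ i ∈ Finset.univ.filter (fun j : Fin ℓ => ¬ (j:ℕ) < q), (g i)⁻¹ * lam i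
        = ∑ j ∈ Finset.univ.filter (fun j : Fin ℓ => q ≤ (j:ℕ)), lam j / σ2 := by
      rw [hrw']
      refine Finset.sum_congr rfl fun i hi => ?_
      rw [Finset.mem_filter] at hi
      rw [hg]; dsimp only
      rw [if_neg (Nat.not_lt.mpr hi.2), inv_mul_eq_div]
    rw [← Finset.sum_filter_add_sum_filter_not Finset.univ (fun j : Fin ℓ => (j:ℕ) < q), e1, e2]
  refine ⟨?_, ?_, ?_, ?_⟩
  · rw [hMU, mul_assoc, mul_assoc, hU, mul_one]
  · -- log det
    have hdet : M.det = ∏ i : Fin ℓ, g i := by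
      rw [hMU, Matrix.det_mul, Matrix.det_mul, Matrix.det_diagonal]
      have : U.det * Uᵀ.det = 1 := by rw [← Matrix.det_mul, hUU, Matrix.det_one]
      rw [Matrix.det_transpose] at this ⊢
      calc U.det * (∏ i : Fin ℓ, g i) * U.det
          = (U.det * U.det) * ∏ i : Fin ℓ, g i := by ring
        _ = ∏ i : Fin ℓ, g i := by rw [this, one_mul]
    rw [hdet, Real.log_prod (fun i _ => (hgpos i).ne')]
    have e1 : ∑ i ∈ Finset.univ.filter (fun j : Fin ℓ => (j:ℕ) < q), Real.log (g i)
        = ∑ j ∈ Finset.univ.filter (fun j : Fin ℓ => (j:ℕ) < q), Real.log (lam j) := by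
      refine Finset.sum_congr rfl fun i hi => ?_
      rw [Finset.mem_filter] at hi
      rw [hg]; dsimp only; rw [if_pos hi.2]
    have e2 : ∑ i ∈ Finset.univ.filter (fun j : Fin ℓ => ¬ (j:ℕ) < q), Real.log (g i)
        = (ℓ - q : ℝ) * Real.log σ2 := by
      have h : ∀ i ∈ Finset.univ.filter (fun j : Fin ℓ => ¬ (j:ℕ) < q),
          Real.log (g i) = Real.log σ2 := by
        intro i hi
        rw [Finset.mem_filter] at hi
        rw [hg]; dsimp only; rw [if_neg hi.2]
      rw [Finset.sum_congr rfl h, Finset.sum_const, hrw', hcardge, nsmul_eq_mul]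
      congr 1
      rw [Nat.cast_sub hq.le]
    rw [← Finset.sum_filter_add_sum_filter_not Finset.univ (fun j : Fin ℓ => (j:ℕ) < q), e1, e2]
  · exact htrace
  · rw [htrace]
    have hT : ∑ j ∈ Finset.univ.filter (fun j : Fin ℓ => q ≤ (j : ℕ)), lam j
        = σ2 * ((ℓ:ℝ) - q) := by
      field_simp at hσ2
      linarith [hσ2]
    rw [← Finset.sum_div, hT, mul_comm, mul_div_assoc, div_self hσ2pos.ne', mul_one]
    push_cast
    ring
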